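/- Let Z = RANDPERM output: Z(i) for i ∈ [u] generated by the Fisher–Yates style algorithm using independent dᵢ uniform on [i:n]. If d and d^{(i)} agree in every coordinate except coordinate i, then the sets {Z_d(1),...,Z_d(u)} and {Z_{d^{(i)}}(1),...,Z_{d^{(i)}}(u)} differ in at most one element each: |{Z_d} ∖ {Z_{d^{(i)}}}| ≤ 1. -/

import Mathlib

/-- Swap the values of I at positions a and b. -/
def swapFun (I : ℕ → ℕ) (a b : ℕ) : ℕ → ℕ :=
  fun x => if x = a then I b else if x = b then I a else I x

/-- State of the array I of RANDPERM before step i (0-indexed), as a function of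
the seed vector d. -/
def stateAux (d : ℕ → ℕ) : ℕ → ℕ → ℕ
  | 0 => fun x => x
  | (i + 1) => swapFun (stateAux d (i)) i (d i)

/-- Output of RANDPERM: Z_d(i) = I(d i) at step i. -/
def Zout (d : ℕ → ℕ) (i : ℕ) : ℕ := stateAux d i (d i)

namespace RPaux

/-- The bare transposition of a and b. -/
def sw (a b : ℕ) : ℕ → ℕ := fun x => if x = a then b else if x = b then a else x

lemma sw_invol (a b x : ℕ) : sw a b (sw a b x) = x := by
  unfold sw; split_ifs <;> simp_all

lemma sw_inj (a b : ℕ) : Function.Injective (sw a b) :=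
  Function.LeftInverse.injective (g := sw a b) (sw_invol a b)

lemma swapFun_eq (I : ℕ → ℕ) (a b x : ℕ) : swapFun I a b x = I (sw a b x) := by
  unfold swapFun sw; split_ifs <;> rfl

lemma stateAux_inj (d : ℕ → ℕ) : ∀ k, Function.Injective (stateAux d k)
  | 0 => fun _ _ h => h
  | (k+1) => by
      intro x y h
      simp only [stateAux, swapFun_eq] at h
      exact sw_inj _ _ (stateAux_inj d k h)

lemma stateAux_congr (d d' : ℕ → ℕ) (k : ℕ) (h : ∀ j < k, d j = d' j) :
    stateAux d k = stateAux d' k := by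
  induction k with
  | zero => rfl
  | succ k ih =>
    simp only [stateAux, ih (fun j hj => h j (by omega)), h k (by omega)]

lemma Zout_eq (d : ℕ → ℕ) (j : ℕ) : ∀ k, j < k → (∀ m < k, m ≤ d m) →
    stateAux d k j = Zout d j := by
  intro k
  induction k with
  | zero => omega
  | succ k ih =>
    intro hjk hd
    rcases Nat.lt_succ_iff_lt_or_eq.mp hjk with h | h
    · have hk : j ≠ k := by omega
      have hdk : j ≠ d k := by have := hd k (by omega); omega
      show swapFun (stateAux d k) k (d k) j = _
      simp only [swapFun, hk, hdk, if_false]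
      exact ih h (fun m hm => hd m (by omega))
    · subst h
      show swapFun (stateAux d j) j (d j) j = _
      simp [swapFun, Zout]

lemma stateAux_id (d : ℕ → ℕ) (c : ℕ) (h : ∀ j < c, d j = j) :
    ∀ m, m ≤ c → ∀ x, stateAux d m x = x := by
  intro m
  induction m with
  | zero => intro _ x; rfl
  | succ m ih =>
    intro hm x
    show swapFun (stateAux d m) m (d m) x = x
    rw [h m (by omega)]
    unfold swapFun
    split_ifs with h1 <;> simp_all [ih (by omega)]

lemma stateAux_fix (d : ℕ → ℕ) (i : ℕ) :
    ∀ k, (∀ j < k, (i ≠ j ∧ i ≠ d j) ∨ d j = j) → stateAux d k i = i := by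
  intro k
  induction k with
  | zero => intro _; rfl
  | succ k ih =>
    intro h
    have ihk := ih (fun j hj => h j (by omega))
    show swapFun (stateAux d k) k (d k) i = i
    rcases h k (by omega) with ⟨h1, h2⟩ | h1
    · simp only [swapFun, h1, h2, if_false]
      exact ihk
    · unfold swapFun
      rw [h1]
      split_ifs with hik <;> simp_all

lemma tail_decomp (d : ℕ → ℕ) (i : ℕ) :
    ∀ k, i + 1 ≤ k → ∀ x,
      stateAux d k x
        = stateAux d (i+1) (stateAux (fun j => if j < i+1 then j else d j) k x) := by
  intro k
  induction k with
  | zero => omega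
  | succ k ih =>
    intro hk x
    rcases Nat.lt_or_ge k (i+1) with h | h
    · have hk' : k = i := by omega
      subst hk'
      rw [stateAux_id (fun j => if j < k+1 then j else d j) (k+1)
        (by intro j hj; simp [hj]) (k+1) le_rfl x]
    · have hek : (fun j => if j < i+1 then j else d j) k = d k := by
        simp [Nat.not_lt.mpr h]
      show swapFun (stateAux d k) k (d k) x
        = stateAux d (i+1) (swapFun (stateAux (fun j => if j < i+1 then j else d j) k) k
            ((fun j => if j < i+1 then j else d j) k) x)
      rw [swapFun_eq, swapFun_eq, hek]
      exact ih h _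

lemma mem_image_sw (T : Finset ℕ) (a b x : ℕ) : x ∈ T.image (sw a b) ↔ sw a b x ∈ T := by
  simp only [Finset.mem_image]
  constructor
  · rintro ⟨y, hy, rfl⟩; rwa [sw_invol]
  · intro h; exact ⟨_, h, sw_invol a b x⟩

lemma key (T : Finset ℕ) (i a b : ℕ) (hiT : i ∈ T) :
    ((T.image (sw i a)) \ (T.image (sw i b))).card ≤ 1 := by
  rw [Finset.card_le_one]
  intro x hx y hy
  rw [Finset.mem_sdiff, mem_image_sw, mem_image_sw] at hx hy
  obtain ⟨hx1, hx2⟩ := hx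
  obtain ⟨hy1, hy2⟩ := hy
  unfold sw at hx1 hx2 hy1 hy2
  split_ifs at hx1 hx2 hy1 hy2 <;> simp_all

end RPaux

/-- If two seed vectors of RANDPERM agree in all coordinates except coordinate i,
then the output sets {Z_d(0..u-1)} and {Z_{d^{(i)}}(0..u-1)} differ in at most one
element. -/
theorem randperm_single_coord_diff (n u : ℕ) (d d' : ℕ → ℕ) (i : ℕ)
    (hiu : i < u) (hun : u ≤ n)
    (hd : ∀ j < u, j ≤ d j ∧ d j < n) (hd' : ∀ j < u, j ≤ d' j ∧ d' j < n)
    (hagree : ∀ j, j ≠ i → d' j = d j) :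
    (((Finset.range u).image (Zout d)) \ ((Finset.range u).image (Zout d'))).card ≤ 1 := by
  classical
  open RPaux in
  set e : ℕ → ℕ := fun j => if j < i+1 then j else d j with he
  -- e built from d' is the same function
  have hee : (fun j => if j < i+1 then j else d' j) = e := by
    funext j
    by_cases hj : j < i+1
    · simp only [he, hj, if_true]
    · simp only [he, hj, if_false, hagree j (by omega)]
  -- the two prefixes agree
  have hpre : stateAux d' i = stateAux d i :=
    RPaux.stateAux_congr d' d i (fun j hj => hagree j (by omega))
  -- Zout images equal stateAux-at-u images
  have hZ : ∀ (dd : ℕ → ℕ), (∀ j < u, j ≤ dd j) →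
      (Finset.range u).image (Zout dd) = (Finset.range u).image (stateAux dd u) := by
    intro dd hdd
    apply Finset.image_congr
    intro x hx
    simp only [Finset.coe_range, Set.mem_Iio] at hx
    exact (RPaux.Zout_eq dd x u hx hdd).symm
  have hdu : ∀ j < u, j ≤ d j := fun j hj => (hd j hj).1
  have hdu' : ∀ j < u, j ≤ d' j := fun j hj => (hd' j hj).1
  rw [hZ d hdu, hZ d' hdu']
  -- decompose stateAux dd u = stateAux dd i ∘ sw i (dd i) ∘ stateAux e u
  have hdec : ∀ x, stateAux d u x = stateAux d i (RPaux.sw i (d i) (stateAux e u x)) := by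
    intro x
    rw [RPaux.tail_decomp d i u (by omega) x]
    show swapFun (stateAux d i) i (d i) _ = _
    rw [RPaux.swapFun_eq]
  have hdec' : ∀ x, stateAux d' u x = stateAux d i (RPaux.sw i (d' i) (stateAux e u x)) := by
    intro x
    rw [RPaux.tail_decomp d' i u (by omega) x, hee]
    show swapFun (stateAux d' i) i (d' i) _ = _
    rw [RPaux.swapFun_eq, hpre]
  have himg : ∀ (c : ℕ),
      (Finset.range u).image (fun x => stateAux d i (RPaux.sw i c (stateAux e u x)))
        = (((Finset.range u).image (stateAux e u)).image (RPaux.sw i c)).image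
            (stateAux d i) := by
    intro c
    rw [Finset.image_image, Finset.image_image]
    rfl
  have h1 : (Finset.range u).image (stateAux d u)
      = (((Finset.range u).image (stateAux e u)).image (RPaux.sw i (d i))).image
          (stateAux d i) := by
    rw [← himg (d i)]
    exact Finset.image_congr (fun x _ => hdec x)
  have h1' : (Finset.range u).image (stateAux d' u)
      = (((Finset.range u).image (stateAux e u)).image (RPaux.sw i (d' i))).image
          (stateAux d i) := by
    rw [← himg (d' i)]
    exact Finset.image_congr (fun x _ => hdec' x)
  rw [h1, h1']
  set T : Finset ℕ := (Finset.range u).image (stateAux e u) with hT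
  have hinj := RPaux.stateAux_inj d i
  rw [← Finset.image_sdiff _ _ hinj, Finset.card_image_of_injective _ hinj]
  apply RPaux.key
  -- i ∈ T since stateAux e u fixes i
  have hfix : stateAux e u i = i := by
    apply RPaux.stateAux_fix
    intro j hj
    by_cases h : j < i+1
    · right; simp only [he, h, if_true]
    · left
      have : e j = d j := by simp only [he, h, if_false]
      rw [this]
      have := (hd j hj).1
      omega
  rw [hT]
  exact Finset.mem_image.mpr ⟨i, Finset.mem_range.mpr hiu, hfix⟩
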